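/- Let G=(X,w,κ,μ) be a finite graph and 1≤p<∞. Assume either f satisfies (F1) and λ>0, or f satisfies (F2) with constant L>0 and 0<λ<1/L. Then for every g:X→ℝ the equation u+λ(−f(u)+Δu)=g on X admits a unique solution u:X→ℝ. Moreover, if g≥0 then u≥0 and if g≤0 then u≤0, and the a priori estimate ‖u‖_p ≤ C‖g‖_p holds with C=1 under (F1) and C=(1−λL)^{−1} under (F2). -/

import Mathlib

open Filter Topology MeasureTheory

/-- A weighted graph `G = (X, w, κ, μ)`. -/
structure WGraph (X : Type*) where
  w : X → X → ℝ
  kap : X → ℝ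
  mu : X → ℝ
  w_nonneg : ∀ x y, 0 ≤ w x y
  w_symm : ∀ x y, w x y = w y x
  w_loopless : ∀ x, w x x = 0
  w_summable : ∀ x, Summable (fun y => w x y)
  kap_nonneg : ∀ x, 0 ≤ kap x
  mu_pos : ∀ x, 0 < mu x

namespace WGraph

variable {X : Type*}

/-- Adjacency: `x ∼ y` iff `w x y > 0`. -/
def Adj (G : WGraph X) (x y : X) : Prop := 0 < G.w x y

/-- `G` is connected: any two nodes are joined by a finite walk. -/
def Connected (G : WGraph X) : Prop := ∀ x y : X, Relation.ReflTransGen G.Adj x y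

/-- An infinite path: injective sequence of consecutively adjacent nodes. -/
def InfinitePath (G : WGraph X) (γ : ℕ → X) : Prop :=
  Function.Injective γ ∧ ∀ n, G.Adj (γ n) (γ (n + 1))

/-- Condition (IP): every infinite path has infinite total measure. -/
def CondIP (G : WGraph X) : Prop :=
  ∀ γ : ℕ → X, G.InfinitePath γ → ¬ Summable (fun n => G.mu (γ n))

/-- Condition (B): bounded edge degree. -/
def CondB (G : WGraph X) : Prop :=
  ∃ C : ℝ, ∀ x, (∑' y, G.w x y) / G.mu x ≤ C

/-- Condition (C_p). -/
def CondCp (G : WGraph X) (p : ℝ) : Prop :=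
  ∀ x, Summable (fun y => G.w x y ^ p / G.mu y ^ (p - 1))

/-- Membership in `ℓ^p(X,μ)` for `1 ≤ p < ∞`. -/
def memLp (G : WGraph X) (p : ℝ) (u : X → ℝ) : Prop :=
  Summable (fun x => |u x| ^ p * G.mu x)

/-- The `ℓ^p(X,μ)`-norm. -/
noncomputable def lpNorm (G : WGraph X) (p : ℝ) (u : X → ℝ) : ℝ :=
  (∑' x, |u x| ^ p * G.mu x) ^ (1 / p)

/-- Membership in the formal domain of the graph Laplacian. -/
def inDomLap (G : WGraph X) (u : X → ℝ) : Prop :=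
  ∀ x, Summable (fun y => G.w x y * |u y|)

/-- The formal graph Laplacian. -/
noncomputable def lap (G : WGraph X) (u : X → ℝ) (x : X) : ℝ :=
  (1 / G.mu x) * ∑' y, G.w x y * (u x - u y) + (G.kap x / G.mu x) * u x

/-- The nonlinear operator `𝒜 u = -f ∘ u + Δ u`. -/
noncomputable def Aop (G : WGraph X) (f : ℝ → ℝ) (u : X → ℝ) (x : X) : ℝ :=
  -f (u x) + G.lap u x

/-- `dom_p(𝒜)`. -/
def inDomA (G : WGraph X) (f : ℝ → ℝ) (p : ℝ) (u : X → ℝ) : Prop :=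
  G.memLp p u ∧ G.inDomLap u ∧ G.memLp p (G.Aop f u)

end WGraph

/-- Condition (F1): `f` continuous, monotone decreasing, `f 0 = 0`. -/
def CondF1 (f : ℝ → ℝ) : Prop := Continuous f ∧ Antitone f ∧ f 0 = 0

/-- Condition (F2): `f` uniformly Lipschitz with constant `L > 0`, `f 0 = 0`. -/
def CondF2 (f : ℝ → ℝ) (L : ℝ) : Prop :=
  0 < L ∧ (∀ s t : ℝ, |f t - f s| ≤ L * |t - s|) ∧ f 0 = 0


namespace Stmt6Aux

noncomputable def phi (p s : ℝ) : ℝ := |s| ^ (p - 1) * Real.sign s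

lemma phi_neg (p s : ℝ) : phi p (-s) = - phi p s := by
  simp [phi, Real.sign_neg, abs_neg, mul_comm]

lemma phi_nonneg {p s : ℝ} (hs : 0 ≤ s) : 0 ≤ phi p s := by
  rcases eq_or_lt_of_le hs with h | h
  · simp [phi, ← h, Real.sign_zero]
  · exact mul_nonneg (Real.rpow_nonneg (abs_nonneg s) _) (by rw [Real.sign_of_pos h]; norm_num)

lemma phi_nonpos {p s : ℝ} (hs : s ≤ 0) : phi p s ≤ 0 := by
  have := phi_nonneg (p := p) (s := -s) (by linarith)
  rw [phi_neg] at this; linarith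

lemma phi_mono {p : ℝ} (hp : 1 ≤ p) : Monotone (phi p) := by
  have key : ∀ s t : ℝ, 0 ≤ s → s ≤ t → phi p s ≤ phi p t := by
    intro s t hs hst
    rcases eq_or_lt_of_le hs with h | h
    · exact le_trans (by simp [phi, ← h, Real.sign_zero]) (phi_nonneg (by linarith))
    · have ht : 0 < t := lt_of_lt_of_le h hst
      simp only [phi, Real.sign_of_pos h, Real.sign_of_pos ht, mul_one]
      exact Real.rpow_le_rpow (abs_nonneg s) (by rwa [abs_of_pos h, abs_of_pos ht]) (by linarith)
  intro s t hst
  rcases le_total 0 s with h | h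
  · exact key s t h hst
  · rcases le_total 0 t with h2 | h2
    · exact le_trans (phi_nonpos h) (phi_nonneg h2)
    · have := key (-t) (-s) (by linarith) (by linarith)
      rw [phi_neg, phi_neg] at this; linarith

lemma abs_rpow_pred_mul {p : ℝ} (hp : 1 ≤ p) (s : ℝ) : |s| ^ (p - 1) * |s| = |s| ^ p := by
  rcases eq_or_ne s 0 with rfl | hs
  · simp [Real.zero_rpow (by linarith : p ≠ 0)]
  · rw [show p = (p-1)+1 by ring, Real.rpow_add (abs_pos.2 hs)]
    ring_nf
    rw [Real.rpow_one]

lemma self_mul_sign' (s : ℝ) : s * Real.sign s = |s| := by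
  rcases lt_trichotomy s 0 with h | h | h
  · rw [Real.sign_of_neg h, abs_of_neg h]; ring
  · simp [h, Real.sign_zero]
  · rw [Real.sign_of_pos h, abs_of_pos h]; ring

lemma mul_phi {p : ℝ} (hp : 1 ≤ p) (s : ℝ) : s * phi p s = |s| ^ p := by
  rw [phi, mul_comm s, mul_assoc, mul_comm (Real.sign s) s, self_mul_sign', abs_rpow_pred_mul hp]

lemma abs_phi (p s : ℝ) : |phi p s| ≤ |s| ^ (p - 1) := by
  rw [phi, abs_mul]
  have : |Real.sign s| ≤ 1 := by
    rcases Real.sign_apply_eq s with h | h | h <;> simp [h]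
  calc |(|s| ^ (p-1))| * |Real.sign s| ≤ |(|s| ^ (p-1))| * 1 :=
        mul_le_mul_of_nonneg_left this (abs_nonneg _)
    _ = |s| ^ (p - 1) := by rw [mul_one, abs_of_nonneg (Real.rpow_nonneg (abs_nonneg s) _)]

end Stmt6Aux

namespace Stmt6Aux2

variable {X : Type*} [Fintype X]

lemma green (w : X → X → ℝ) (hw : ∀ x y, 0 ≤ w x y) (hsymm : ∀ x y, w x y = w y x)
    (u φu : X → ℝ) (hmono : ∀ x y, u x ≤ u y → φu x ≤ φu y) :
    0 ≤ ∑ x, (∑ y, w x y * (u x - u y)) * φu x := by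
  have expand : ∀ (v : X → ℝ), (∑ x, (∑ y, w x y * (u x - u y)) * v x)
      = ∑ x, ∑ y, w x y * (u x - u y) * v x := by
    intro v; refine Finset.sum_congr rfl fun x _ => ?_; rw [Finset.sum_mul]
  have h2 : (∑ x, (∑ y, w x y * (u x - u y)) * φu x) * 2
      = ∑ x, ∑ y, w x y * (u x - u y) * (φu x - φu y) := by
    rw [expand]
    rw [show (∑ x, ∑ y, w x y * (u x - u y) * φu x) * 2
        = (∑ x, ∑ y, w x y * (u x - u y) * φu x)
          + (∑ x, ∑ y, w x y * (u x - u y) * φu x) by ring]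
    nth_rewrite 2 [Finset.sum_comm]
    rw [← Finset.sum_add_distrib]
    refine Finset.sum_congr rfl fun x _ => ?_
    rw [← Finset.sum_add_distrib]
    refine Finset.sum_congr rfl fun y _ => ?_
    rw [hsymm y x]; ring
  have h3 : 0 ≤ ∑ x, ∑ y, w x y * (u x - u y) * (φu x - φu y) := by
    refine Finset.sum_nonneg fun x _ => Finset.sum_nonneg fun y _ => ?_
    have hprod : 0 ≤ (u x - u y) * (φu x - φu y) := by
      rcases le_total (u x) (u y) with h | h
      · nlinarith [hmono x y h]
      · nlinarith [hmono y x h]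
    rw [mul_assoc]
    exact mul_nonneg (hw x y) hprod
  linarith

lemma holder {p : ℝ} (hp : 1 ≤ p) (μ a b : X → ℝ) (hμ : ∀ x, 0 < μ x)
    (ha : ∀ x, 0 ≤ a x) (hb : ∀ x, 0 ≤ b x) :
    ∑ x, a x * b x ^ (p - 1) * μ x
      ≤ (∑ x, a x ^ p * μ x) ^ (1/p) * (∑ x, b x ^ p * μ x) ^ (1 - 1/p) := by
  rcases eq_or_lt_of_le hp with h1 | h1
  · simp only [← h1]
    norm_num [Real.rpow_one]
  · have hpq : p.HolderConjugate (p / (p-1)) := (Real.holderConjugate_iff_eq_conjExponent h1).2 rfl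
    set q := p / (p - 1) with hq
    have hq1 : 1 - 1/p = 1/q := by
      rw [one_div, one_div, hpq.one_sub_inv]
    have hsum : 1/p + 1/q = 1 := by rw [one_div, one_div, hpq.inv_add_inv_eq_one]
    have key := Real.inner_le_Lp_mul_Lq_of_nonneg Finset.univ
      (f := fun x => a x * μ x ^ (1/p)) (g := fun x => b x ^ (p-1) * μ x ^ (1/q)) hpq
      (fun i _ => mul_nonneg (ha i) (Real.rpow_nonneg (hμ i).le _))
      (fun i _ => mul_nonneg (Real.rpow_nonneg (hb i) _) (Real.rpow_nonneg (hμ i).le _))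
    have e1 : ∀ x : X, (a x * μ x ^ (1/p)) * (b x ^ (p-1) * μ x ^ (1/q))
        = a x * b x ^ (p-1) * μ x := by
      intro x
      rw [show (a x * μ x ^ (1/p)) * (b x ^ (p-1) * μ x ^ (1/q))
          = a x * b x ^ (p-1) * (μ x ^ (1/p) * μ x ^ (1/q)) by ring,
        ← Real.rpow_add (hμ x), hsum, Real.rpow_one]
    have e2 : ∀ x : X, (a x * μ x ^ (1/p)) ^ p = a x ^ p * μ x := by
      intro x
      rw [Real.mul_rpow (ha x) (Real.rpow_nonneg (hμ x).le _),
        ← Real.rpow_mul (hμ x).le, one_div, inv_mul_cancel₀ hpq.ne_zero, Real.rpow_one]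
    have e3 : ∀ x : X, (b x ^ (p-1) * μ x ^ (1/q)) ^ q = b x ^ p * μ x := by
      intro x
      rw [Real.mul_rpow (Real.rpow_nonneg (hb x) _) (Real.rpow_nonneg (hμ x).le _),
        ← Real.rpow_mul (hb x), hpq.sub_one_mul_conj,
        ← Real.rpow_mul (hμ x).le, one_div, inv_mul_cancel₀ hpq.symm.ne_zero, Real.rpow_one]
    calc ∑ x, a x * b x ^ (p-1) * μ x
        = ∑ x, (a x * μ x ^ (1/p)) * (b x ^ (p-1) * μ x ^ (1/q)) :=
          Finset.sum_congr rfl fun x _ => (e1 x).symm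
      _ ≤ (∑ x, (a x * μ x ^ (1/p)) ^ p) ^ (1/p)
            * (∑ x, (b x ^ (p-1) * μ x ^ (1/q)) ^ q) ^ (1/q) := key
      _ = (∑ x, a x ^ p * μ x) ^ (1/p) * (∑ x, b x ^ p * μ x) ^ (1 - 1/p) := by
          rw [hq1]
          congr 1
          · congr 1; exact Finset.sum_congr rfl fun x _ => e2 x
          · congr 1; exact Finset.sum_congr rfl fun x _ => e3 x

end Stmt6Aux2

namespace Stmt6Aux

variable {X : Type*} [Fintype X]

noncomputable def Dg (G : WGraph X) (x : X) : ℝ := ∑ y, G.w x y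

noncomputable def psiF (G : WGraph X) (f : ℝ → ℝ) (lam : ℝ) (x : X) (s : ℝ) : ℝ :=
  (G.mu x + lam * G.kap x + lam * Dg G x) * s - lam * G.mu x * f s

noncomputable def mm (G : WGraph X) (lam L0 : ℝ) (x : X) : ℝ :=
  (1 - lam * L0) * G.mu x + lam * G.kap x + lam * Dg G x

lemma Dg_nonneg (G : WGraph X) (x : X) : 0 ≤ Dg G x :=
  Finset.sum_nonneg fun y _ => G.w_nonneg x y

lemma mm_pos (G : WGraph X) {lam L0 : ℝ} (hlam : 0 < lam) (hL : lam * L0 < 1) (x : X) :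
    0 < mm G lam L0 x := by
  have h1 := G.mu_pos x
  have h2 := G.kap_nonneg x
  have h3 := Dg_nonneg G x
  unfold mm
  nlinarith [mul_nonneg hlam.le h2, mul_nonneg hlam.le h3]

lemma psi_gap (G : WGraph X) {f : ℝ → ℝ} {lam L0 : ℝ} (hlam : 0 ≤ lam)
    (hf1 : ∀ s t : ℝ, s ≤ t → f t - f s ≤ L0 * (t - s)) (x : X) {s t : ℝ} (hst : s ≤ t) :
    mm G lam L0 x * (t - s) ≤ psiF G f lam x t - psiF G f lam x s := by
  have key : lam * G.mu x * (f t - f s) ≤ lam * G.mu x * (L0 * (t - s)) :=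
    mul_le_mul_of_nonneg_left (hf1 s t hst) (mul_nonneg hlam (G.mu_pos x).le)
  unfold psiF mm
  nlinarith [key]

lemma eq_iff_psi (G : WGraph X) (f : ℝ → ℝ) (lam : ℝ) (g u : X → ℝ) (x : X) :
    (u x + lam * G.Aop f u x = g x) ↔
      psiF G f lam x (u x) = G.mu x * g x + lam * ∑ y, G.w x y * u y := by
  have hμ : G.mu x ≠ 0 := (G.mu_pos x).ne'
  have hsum : (∑' y, G.w x y * (u x - u y)) = Dg G x * u x - ∑ y, G.w x y * u y := by
    rw [tsum_fintype, Dg, Finset.sum_mul, ← Finset.sum_sub_distrib]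
    exact Finset.sum_congr rfl fun y _ => by ring
  have expand : G.mu x * (u x + lam * G.Aop f u x)
      = psiF G f lam x (u x) - lam * ∑ y, G.w x y * u y := by
    simp only [WGraph.Aop, WGraph.lap, hsum, psiF]
    field_simp
    ring
  constructor
  · intro h
    have h2 : G.mu x * (u x + lam * G.Aop f u x) = G.mu x * g x := by rw [h]
    linarith [expand, h2]
  · intro h
    have h2 : G.mu x * (u x + lam * G.Aop f u x) = G.mu x * g x := by linarith [expand, h]
    exact mul_left_cancel₀ hμ h2

end Stmt6Aux

section MainProof
open Stmt6Aux Finset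

/-- on a finite graph, `u + λ(-f(u) + Δu) = g` has a unique solution;
the solution preserves the sign of the datum and satisfies `‖u‖_p ≤ C ‖g‖_p`. -/
theorem stmt6 {X : Type*} [Finite X] (G : WGraph X) (f : ℝ → ℝ) (p lam C : ℝ)
    (hp : 1 ≤ p)
    (hf : (CondF1 f ∧ 0 < lam ∧ C = 1) ∨
      (∃ L, CondF2 f L ∧ 0 < lam ∧ lam < 1 / L ∧ C = (1 - lam * L)⁻¹))
    (g : X → ℝ) :
    (∃! u : X → ℝ, ∀ x, u x + lam * G.Aop f u x = g x) ∧
    (∀ u : X → ℝ, (∀ x, u x + lam * G.Aop f u x = g x) →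
      ((∀ x, 0 ≤ g x) → ∀ x, 0 ≤ u x) ∧
      ((∀ x, g x ≤ 0) → ∀ x, u x ≤ 0) ∧
      G.lpNorm p u ≤ C * G.lpNorm p g) := by
  have hp0 : (0:ℝ) < p := by linarith
  obtain ⟨L0, hL0, hlamL, hlam, hC, hcont, hf1, hf2⟩ :
      ∃ L0 : ℝ, 0 ≤ L0 ∧ lam * L0 < 1 ∧ 0 < lam ∧ C = (1 - lam * L0)⁻¹ ∧
        Continuous f ∧ (∀ s t : ℝ, s ≤ t → f t - f s ≤ L0 * (t - s)) ∧
        (∀ s : ℝ, f s * Real.sign s ≤ L0 * |s|) := by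
    rcases hf with ⟨⟨hcont, hanti, hf0⟩, hlam, hC⟩ | ⟨L, ⟨hL, hlip, hf0⟩, hlam, hlt, hC⟩
    · refine ⟨0, le_refl 0, by norm_num, hlam, by simp [hC], hcont,
        fun s t hst => by simpa using sub_nonpos.2 (hanti hst), fun s => ?_⟩
      rcases lt_trichotomy s 0 with h | h | h
      · have h2 : f 0 ≤ f s := hanti h.le
        rw [Real.sign_of_neg h]
        nlinarith [abs_nonneg s]
      · simp [h, Real.sign_zero]
      · have h2 : f s ≤ f 0 := hanti h.le
        rw [Real.sign_of_pos h]
        nlinarith [abs_nonneg s]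
    · have habs : ∀ s : ℝ, |f s| ≤ L * |s| := by
        intro s
        have := hlip 0 s
        simpa [hf0] using this
      refine ⟨L, hL.le, (lt_div_iff₀ hL).mp hlt, hlam, hC, ?_, ?_, ?_⟩
      · have : LipschitzWith (Real.toNNReal L) f := by
          apply LipschitzWith.of_dist_le_mul
          intro s t
          rw [Real.dist_eq, Real.dist_eq, Real.coe_toNNReal L hL.le]
          exact hlip t s
        exact this.continuous
      · intro s t hst
        calc f t - f s ≤ |f t - f s| := le_abs_self _
          _ ≤ L * |t - s| := hlip s t
          _ = L * (t - s) := by rw [abs_of_nonneg (by linarith)]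
      · intro s
        calc f s * Real.sign s ≤ |f s * Real.sign s| := le_abs_self _
          _ = |f s| * |Real.sign s| := abs_mul _ _
          _ ≤ |f s| * 1 := by
              refine mul_le_mul_of_nonneg_left ?_ (abs_nonneg _)
              rcases Real.sign_apply_eq s with h | h | h <;> simp [h]
          _ ≤ L * |s| := by rw [mul_one]; exact habs s
  have h1L : 0 < 1 - lam * L0 := by linarith
  have hC0 : 0 < C := by rw [hC]; exact inv_pos.2 h1L
  rcases isEmpty_or_nonempty X with hX | hX
  · refine ⟨⟨fun _ => 0, fun x => isEmptyElim x, fun v _ => funext fun x => isEmptyElim x⟩, ?_⟩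
    intro u _
    refine ⟨fun _ x => isEmptyElim x, fun _ x => isEmptyElim x, ?_⟩
    have hz : ∀ v : X → ℝ, G.lpNorm p v = 0 := by
      intro v
      rw [WGraph.lpNorm, tsum_empty, Real.zero_rpow (one_div_ne_zero hp0.ne')]
    rw [hz u, hz g, mul_zero]
  haveI := Fintype.ofFinite X
  -- strict monotonicity, continuity, surjectivity of psi
  have hmpos : ∀ x, 0 < mm G lam L0 x := mm_pos G hlam hlamL
  have hgap := psi_gap (G := G) (f := f) hlam.le hf1
  have hpsimono : ∀ x, StrictMono (psiF G f lam x) := by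
    intro x s t hst
    have h1 := hgap x hst.le
    nlinarith [mul_pos (hmpos x) (sub_pos.2 hst)]
  have hpsicont : ∀ x, Continuous (psiF G f lam x) := by
    intro x
    exact (continuous_const.mul continuous_id).sub (continuous_const.mul hcont)
  have hsurj : ∀ (x : X) (r : ℝ), ∃ s, psiF G f lam x s = r := by
    intro x r
    have hm := hmpos x
    set m := mm G lam L0 x
    set c := psiF G f lam x 0 with hc
    set t0 : ℝ := max 0 ((r - c) / m) with ht0
    set s0 : ℝ := min 0 ((r - c) / m) with hs0
    have h1 : r ≤ psiF G f lam x t0 := by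
      have hg := hgap x (le_max_left 0 ((r - c) / m))
      have h3 : r - c ≤ m * t0 := by
        rw [← div_le_iff₀' hm]
        exact le_max_right _ _
      linarith
    have h2 : psiF G f lam x s0 ≤ r := by
      have hg := hgap x (min_le_left 0 ((r - c) / m))
      have h3 : m * s0 ≤ r - c := by
        rw [← le_div_iff₀' hm]
        exact min_le_right _ _
      linarith
    have hst : s0 ≤ t0 := le_trans (min_le_left _ _) (le_max_left _ _)
    obtain ⟨s, _, hs⟩ := intermediate_value_Icc hst (hpsicont x).continuousOn ⟨h2, h1⟩
    exact ⟨s, hs⟩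
  choose pinv hpinv using hsurj
  have hinvlip : ∀ (x : X) (a b : ℝ), mm G lam L0 x * |pinv x a - pinv x b| ≤ |a - b| := by
    intro x a b
    rcases le_total (pinv x a) (pinv x b) with h | h
    · have hg := hgap x h
      rw [hpinv, hpinv] at hg
      rw [abs_sub_comm, abs_of_nonneg (sub_nonneg.2 h), abs_sub_comm]
      exact hg.trans (le_abs_self _)
    · have hg := hgap x h
      rw [hpinv, hpinv] at hg
      rw [abs_of_nonneg (sub_nonneg.2 h)]
      exact hg.trans (le_abs_self _)
  set Φ : (X → ℝ) → (X → ℝ) :=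
    fun u x => pinv x (G.mu x * g x + lam * ∑ y, G.w x y * u y) with hΦ
  have hfix_iff : ∀ u : X → ℝ, (∀ x, u x + lam * G.Aop f u x = g x) ↔ Φ u = u := by
    intro u
    constructor
    · intro h
      funext x
      have h1 := (eq_iff_psi G f lam g u x).1 (h x)
      have h2 : psiF G f lam x (Φ u x) = psiF G f lam x (u x) := by
        rw [hΦ, hpinv, h1]
      exact (hpsimono x).injective h2
    · intro h x
      apply (eq_iff_psi G f lam g u x).2
      have h2 : u x = Φ u x := by rw [h]
      rw [h2, hΦ]
      exact hpinv x _
  set Kr : ℝ := Finset.univ.sup' Finset.univ_nonempty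
    (fun x => lam * Dg G x / mm G lam L0 x) with hKr
  have hKr0 : 0 ≤ Kr := by
    refine le_trans ?_ (Finset.le_sup' _ (Finset.mem_univ (Classical.arbitrary X)))
    exact div_nonneg (mul_nonneg hlam.le (Dg_nonneg G _)) (hmpos _).le
  have hKrx : ∀ x, lam * Dg G x / mm G lam L0 x ≤ Kr := by
    intro x
    rw [hKr]
    exact Finset.le_sup' (fun x => lam * Dg G x / mm G lam L0 x) (Finset.mem_univ x)
  have hKr1 : Kr < 1 := by
    rw [hKr]
    refine (Finset.sup'_lt_iff _).mpr fun x _ => ?_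
    rw [div_lt_one (hmpos x)]
    have h1 := G.mu_pos x
    have h2 := G.kap_nonneg x
    unfold mm
    nlinarith [mul_nonneg hlam.le h2]
  have hcontr : ∀ u v : X → ℝ, dist (Φ u) (Φ v) ≤ Kr * dist u v := by
    intro u v
    rw [dist_pi_le_iff (mul_nonneg hKr0 dist_nonneg)]
    intro x
    rw [Real.dist_eq]
    have hdx : |(G.mu x * g x + lam * ∑ y, G.w x y * u y)
        - (G.mu x * g x + lam * ∑ y, G.w x y * v y)| ≤ lam * Dg G x * dist u v := by
      have e1 : (G.mu x * g x + lam * ∑ y, G.w x y * u y)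
          - (G.mu x * g x + lam * ∑ y, G.w x y * v y)
          = lam * ∑ y, G.w x y * (u y - v y) := by
        have e0 : ∑ y, G.w x y * (u y - v y)
            = (∑ y, G.w x y * u y) - ∑ y, G.w x y * v y := by
          rw [← Finset.sum_sub_distrib]
          exact Finset.sum_congr rfl fun y _ => by ring
        rw [e0]
        ring
      rw [e1, abs_mul, abs_of_nonneg hlam.le]
      have h2 : |∑ y, G.w x y * (u y - v y)| ≤ Dg G x * dist u v := by
        calc |∑ y, G.w x y * (u y - v y)| ≤ ∑ y, |G.w x y * (u y - v y)| :=
              Finset.abs_sum_le_sum_abs _ _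
          _ ≤ ∑ y, G.w x y * dist u v := by
              refine Finset.sum_le_sum fun y _ => ?_
              rw [abs_mul, abs_of_nonneg (G.w_nonneg x y)]
              refine mul_le_mul_of_nonneg_left ?_ (G.w_nonneg x y)
              rw [← Real.dist_eq]
              exact dist_le_pi_dist u v y
          _ = Dg G x * dist u v := by rw [Dg, Finset.sum_mul]
      calc lam * |∑ y, G.w x y * (u y - v y)| ≤ lam * (Dg G x * dist u v) :=
            mul_le_mul_of_nonneg_left h2 hlam.le
        _ = lam * Dg G x * dist u v := by ring
    have hlp := hinvlip x (G.mu x * g x + lam * ∑ y, G.w x y * u y)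
      (G.mu x * g x + lam * ∑ y, G.w x y * v y)
    have hm := hmpos x
    have hK := hKrx x
    have hfin : |Φ u x - Φ v x| ≤ lam * Dg G x / mm G lam L0 x * dist u v := by
      rw [div_mul_eq_mul_div, le_div_iff₀ hm, mul_comm]
      exact le_trans hlp hdx
    refine le_trans hfin ?_
    exact mul_le_mul_of_nonneg_right hK dist_nonneg
  set K : NNReal := Real.toNNReal Kr with hK
  have hlipK : LipschitzWith K Φ := by
    apply LipschitzWith.of_dist_le_mul
    intro u v
    rw [hK, Real.coe_toNNReal Kr hKr0]
    exact hcontr u v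
  have hcw : ContractingWith K Φ := by
    refine ⟨?_, hlipK⟩
    rw [hK]
    exact Real.toNNReal_lt_one.mpr hKr1
  set u₀ : X → ℝ := ContractingWith.fixedPoint Φ hcw with hu₀
  have hfp : Φ u₀ = u₀ := hcw.fixedPoint_isFixedPt
  have huniq : ∀ v : X → ℝ, Φ v = v → v = u₀ := by
    intro v hv
    have h1 := hcontr v u₀
    rw [hv, hfp] at h1
    have h2 : dist v u₀ = 0 := by nlinarith [dist_nonneg (x := v) (y := u₀)]
    exact dist_eq_zero.1 h2
  have sign_pos : ∀ u : X → ℝ, (∀ x, u x + lam * G.Aop f u x = g x) →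
      (∀ x, 0 ≤ g x) → ∀ x, 0 ≤ u x := by
    intro u hu hg
    by_contra hcon
    push_neg at hcon
    obtain ⟨z, hz⟩ := hcon
    obtain ⟨x0, -, hmin⟩ := Finset.exists_min_image Finset.univ u ⟨z, Finset.mem_univ z⟩
    have hs : u x0 < 0 := lt_of_le_of_lt (hmin z (Finset.mem_univ z)) hz
    have hpsi := (eq_iff_psi G f lam g u x0).1 (hu x0)
    have hsign := hf2 (u x0)
    rw [Real.sign_of_neg hs, abs_of_neg hs] at hsign
    have h1 : psiF G f lam x0 (u x0) ≤ mm G lam L0 x0 * u x0 := by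
      have hmul : lam * G.mu x0 * (f (u x0) * (-1)) ≤ lam * G.mu x0 * (L0 * (-u x0)) :=
        mul_le_mul_of_nonneg_left hsign (mul_nonneg hlam.le (G.mu_pos x0).le)
      unfold psiF mm
      nlinarith [hmul]
    have h2 : lam * (Dg G x0 * u x0) ≤ psiF G f lam x0 (u x0) := by
      have hterm : (∑ y, G.w x0 y * u x0) ≤ ∑ y, G.w x0 y * u y :=
        Finset.sum_le_sum fun y _ =>
          mul_le_mul_of_nonneg_left (hmin y (Finset.mem_univ y)) (G.w_nonneg x0 y)
      have hD : Dg G x0 * u x0 = ∑ y, G.w x0 y * u x0 := by rw [Dg, Finset.sum_mul]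
      have hg0 : 0 ≤ G.mu x0 * g x0 := mul_nonneg (G.mu_pos x0).le (hg x0)
      have h3 : lam * (Dg G x0 * u x0) ≤ lam * ∑ y, G.w x0 y * u y := by
        rw [hD]; exact mul_le_mul_of_nonneg_left hterm hlam.le
      linarith [hpsi]
    have h4 := G.mu_pos x0
    have h5 := G.kap_nonneg x0
    unfold mm at h1
    nlinarith [mul_pos (mul_pos h1L h4) (neg_pos.2 hs),
      mul_nonneg (mul_nonneg hlam.le h5) (neg_pos.2 hs).le]
  have sign_neg : ∀ u : X → ℝ, (∀ x, u x + lam * G.Aop f u x = g x) →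
      (∀ x, g x ≤ 0) → ∀ x, u x ≤ 0 := by
    intro u hu hg
    by_contra hcon
    push_neg at hcon
    obtain ⟨z, hz⟩ := hcon
    obtain ⟨x0, -, hmax⟩ := Finset.exists_max_image Finset.univ u ⟨z, Finset.mem_univ z⟩
    have hs : 0 < u x0 := lt_of_lt_of_le hz (hmax z (Finset.mem_univ z))
    have hpsi := (eq_iff_psi G f lam g u x0).1 (hu x0)
    have hsign := hf2 (u x0)
    rw [Real.sign_of_pos hs, abs_of_pos hs] at hsign
    have h1 : mm G lam L0 x0 * u x0 ≤ psiF G f lam x0 (u x0) := by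
      have hmul : lam * G.mu x0 * (f (u x0) * 1) ≤ lam * G.mu x0 * (L0 * u x0) :=
        mul_le_mul_of_nonneg_left hsign (mul_nonneg hlam.le (G.mu_pos x0).le)
      unfold psiF mm
      nlinarith [hmul]
    have h2 : psiF G f lam x0 (u x0) ≤ lam * (Dg G x0 * u x0) := by
      have hterm : (∑ y, G.w x0 y * u y) ≤ ∑ y, G.w x0 y * u x0 :=
        Finset.sum_le_sum fun y _ =>
          mul_le_mul_of_nonneg_left (hmax y (Finset.mem_univ y)) (G.w_nonneg x0 y)
      have hD : Dg G x0 * u x0 = ∑ y, G.w x0 y * u x0 := by rw [Dg, Finset.sum_mul]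
      have hg0 : G.mu x0 * g x0 ≤ 0 :=
        mul_nonpos_of_nonneg_of_nonpos (G.mu_pos x0).le (hg x0)
      have h3 : lam * ∑ y, G.w x0 y * u y ≤ lam * (Dg G x0 * u x0) := by
        rw [hD]; exact mul_le_mul_of_nonneg_left hterm hlam.le
      linarith [hpsi]
    have h4 := G.mu_pos x0
    have h5 := G.kap_nonneg x0
    unfold mm at h1
    nlinarith [mul_pos (mul_pos h1L h4) hs,
      mul_nonneg (mul_nonneg hlam.le h5) hs.le]
  have norm_est : ∀ u : X → ℝ, (∀ x, u x + lam * G.Aop f u x = g x) →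
      G.lpNorm p u ≤ C * G.lpNorm p g := by
    intro u hu
    set S := ∑ x, |u x| ^ p * G.mu x with hS
    set GS := ∑ x, |g x| ^ p * G.mu x with hGS
    have hSnn : 0 ≤ S := Finset.sum_nonneg fun x _ =>
      mul_nonneg (Real.rpow_nonneg (abs_nonneg _) _) (G.mu_pos x).le
    have hGSnn : 0 ≤ GS := Finset.sum_nonneg fun x _ =>
      mul_nonneg (Real.rpow_nonneg (abs_nonneg _) _) (G.mu_pos x).le
    have hlpu : G.lpNorm p u = S ^ (1/p) := by rw [WGraph.lpNorm, tsum_fintype]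
    have hlpg : G.lpNorm p g = GS ^ (1/p) := by rw [WGraph.lpNorm, tsum_fintype]
    have hpt : ∀ x, |u x| ^ p * G.mu x + lam * (G.kap x * |u x| ^ p)
        - lam * (G.mu x * (f (u x) * phi p (u x)))
        + lam * ((∑ y, G.w x y * (u x - u y)) * phi p (u x))
        = G.mu x * g x * phi p (u x) := by
      intro x
      have hpsi := (eq_iff_psi G f lam g u x).1 (hu x)
      have hm := mul_phi hp (u x)
      have hsum : (∑ y, G.w x y * (u x - u y)) = Dg G x * u x - ∑ y, G.w x y * u y := by
        rw [Dg, Finset.sum_mul, ← Finset.sum_sub_distrib]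
        exact Finset.sum_congr rfl fun y _ => by ring
      unfold psiF at hpsi
      linear_combination (phi p (u x)) * hpsi + (lam * phi p (u x)) * hsum
        - (G.mu x + lam * G.kap x) * hm
    have hsumid : S + lam * (∑ x, G.kap x * |u x| ^ p)
        - lam * (∑ x, G.mu x * (f (u x) * phi p (u x)))
        + lam * (∑ x, (∑ y, G.w x y * (u x - u y)) * phi p (u x))
        = ∑ x, G.mu x * g x * phi p (u x) := by
      rw [hS, Finset.mul_sum, Finset.mul_sum, Finset.mul_sum,
        ← Finset.sum_add_distrib, ← Finset.sum_sub_distrib, ← Finset.sum_add_distrib]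
      exact Finset.sum_congr rfl fun x _ => hpt x
    have hb1 : 0 ≤ ∑ x, G.kap x * |u x| ^ p := Finset.sum_nonneg fun x _ =>
      mul_nonneg (G.kap_nonneg x) (Real.rpow_nonneg (abs_nonneg _) _)
    have hb2 : 0 ≤ ∑ x, (∑ y, G.w x y * (u x - u y)) * phi p (u x) :=
      Stmt6Aux2.green G.w G.w_nonneg G.w_symm u (fun x => phi p (u x))
        (fun x y h => phi_mono hp h)
    have hb3 : ∑ x, G.mu x * (f (u x) * phi p (u x)) ≤ L0 * S := by
      rw [hS, Finset.mul_sum]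
      refine Finset.sum_le_sum fun x _ => ?_
      have hfx : f (u x) * phi p (u x) ≤ L0 * |u x| ^ p := by
        calc f (u x) * phi p (u x) = (f (u x) * Real.sign (u x)) * |u x| ^ (p-1) := by
              rw [phi]; ring
          _ ≤ (L0 * |u x|) * |u x| ^ (p-1) :=
              mul_le_mul_of_nonneg_right (hf2 (u x)) (Real.rpow_nonneg (abs_nonneg _) _)
          _ = L0 * (|u x| ^ (p-1) * |u x|) := by ring
          _ = L0 * |u x| ^ p := by rw [abs_rpow_pred_mul hp]
      calc G.mu x * (f (u x) * phi p (u x)) ≤ G.mu x * (L0 * |u x| ^ p) :=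
            mul_le_mul_of_nonneg_left hfx (G.mu_pos x).le
        _ = L0 * (|u x| ^ p * G.mu x) := by ring
    have hmain1 : (1 - lam * L0) * S ≤ ∑ x, G.mu x * g x * phi p (u x) := by
      have h3 := mul_le_mul_of_nonneg_left hb3 hlam.le
      nlinarith [mul_nonneg hlam.le hb1, mul_nonneg hlam.le hb2]
    have hgb : ∑ x, G.mu x * g x * phi p (u x) ≤ ∑ x, |g x| * |u x| ^ (p-1) * G.mu x := by
      refine Finset.sum_le_sum fun x _ => ?_
      have h1 : g x * phi p (u x) ≤ |g x| * |u x| ^ (p-1) := by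
        calc g x * phi p (u x) ≤ |g x * phi p (u x)| := le_abs_self _
          _ = |g x| * |phi p (u x)| := abs_mul _ _
          _ ≤ |g x| * |u x| ^ (p-1) :=
              mul_le_mul_of_nonneg_left (abs_phi p (u x)) (abs_nonneg _)
      calc G.mu x * g x * phi p (u x) = (g x * phi p (u x)) * G.mu x := by ring
        _ ≤ (|g x| * |u x| ^ (p-1)) * G.mu x :=
            mul_le_mul_of_nonneg_right h1 (G.mu_pos x).le
        _ = |g x| * |u x| ^ (p-1) * G.mu x := by ring
    have hhold := Stmt6Aux2.holder hp G.mu (fun x => |g x|) (fun x => |u x|) G.mu_pos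
      (fun x => abs_nonneg _) (fun x => abs_nonneg _)
    rw [← hGS, ← hS] at hhold
    have hmain : (1 - lam * L0) * S ≤ GS ^ (1/p) * S ^ (1 - 1/p) :=
      le_trans hmain1 (le_trans hgb hhold)
    rw [hlpu, hlpg, hC]
    rcases eq_or_lt_of_le hSnn with hS0 | hS0
    · rw [← hS0, Real.zero_rpow (one_div_ne_zero hp0.ne')]
      exact mul_nonneg (inv_nonneg.2 h1L.le) (Real.rpow_nonneg hGSnn _)
    · have hfrac : S = S ^ (1/p) * S ^ (1 - 1/p) := by
        rw [← Real.rpow_add hS0, show 1/p + (1 - 1/p) = 1 by ring, Real.rpow_one]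
      have hpos2 : 0 < S ^ (1 - 1/p) := Real.rpow_pos_of_pos hS0 _
      have h6 : (1 - lam * L0) * S ^ (1/p) ≤ GS ^ (1/p) := by
        have h5 : ((1 - lam * L0) * S ^ (1/p)) * S ^ (1 - 1/p)
            ≤ GS ^ (1/p) * S ^ (1 - 1/p) := by
          calc ((1 - lam * L0) * S ^ (1/p)) * S ^ (1 - 1/p)
              = (1 - lam * L0) * S := by rw [mul_assoc, ← hfrac]
            _ ≤ GS ^ (1/p) * S ^ (1 - 1/p) := hmain
        exact le_of_mul_le_mul_right h5 hpos2
      have h7 := mul_le_mul_of_nonneg_left h6 (inv_nonneg.2 h1L.le)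
      rw [← mul_assoc, inv_mul_cancel₀ h1L.ne', one_mul] at h7
      exact h7
  refine ⟨⟨u₀, (hfix_iff u₀).2 hfp, fun v hv => huniq v ((hfix_iff v).1 hv)⟩, ?_⟩
  intro u hu
  exact ⟨sign_pos u hu, sign_neg u hu, norm_est u hu⟩

end MainProof
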